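/- Let φ : ℝ → ℝ be a C², 2π-periodic solution of φ̈(τ) + |φ(τ)|^{1/2}φ(τ) = 0 with minimal period 2π, odd, φ(0) = 0 and φ̇(0) > 0. Suppose v : ℝ → ℝ is any C², 2π-periodic function satisfying v̈(τ) + (3/2)|φ(τ)|^{1/2} v(τ) = −2φ̈(τ) for all τ. Then ∫_{−π}^{π} (φ̇(τ) + 2v̇(τ)) φ̇(τ) dτ = 10π(φ̇(0))². -/

import Mathlib

open Real

lemma c2_facts (f : ℝ → ℝ) (h : ContDiff ℝ 2 f) :
    Differentiable ℝ f ∧ Differentiable ℝ (deriv f) ∧ Continuous (deriv (deriv f)) := by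
  have h2 : ContDiff ℝ (1+1) f := by
    rw [show ((1:WithTop ℕ∞)+1) = 2 by norm_num]; exact h
  have h1 := (contDiff_succ_iff_deriv.mp h2).2.2
  have h0 : ContDiff ℝ (0+1) (deriv f) := by
    rw [show ((0:WithTop ℕ∞)+1) = 1 by norm_num]; exact h1
  have h00 := (contDiff_succ_iff_deriv.mp h0).2.2
  exact ⟨h.differentiable two_ne_zero, h1.differentiable one_ne_zero, h00.continuous⟩

lemma periodic_deriv' (f : ℝ → ℝ) (c : ℝ) (h : Function.Periodic f c)
    (hf : Differentiable ℝ f) : Function.Periodic (deriv f) c := by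
  intro x
  have h1 : deriv (fun y => f (y + c)) x = deriv f (x + c) := by
    simpa [Function.comp_def] using ((hf (x + c)).hasDerivAt.comp x ((hasDerivAt_id x).add_const c)).deriv
  rw [← h1]
  congr 1
  ext y
  exact h y

lemma hasDerivAt_G (x : ℝ) :
    HasDerivAt (fun y : ℝ => Real.sqrt |y| * y ^ 2) ((5/2) * Real.sqrt |x| * x) x := by
  rcases lt_trichotomy x 0 with hx | hx | hx
  · have hs : HasDerivAt (fun y : ℝ => Real.sqrt (-y)) (-(1 / (2 * Real.sqrt (-x)))) x := by
      have := (Real.hasDerivAt_sqrt (x := -x) (by linarith)).comp x (hasDerivAt_neg x)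
      simpa [mul_comm, Function.comp_def] using this
    have h1 := hs.mul (hasDerivAt_pow 2 x)
    have heq : (fun y : ℝ => Real.sqrt |y| * y ^ 2) =ᶠ[nhds x] (fun y : ℝ => Real.sqrt (-y) * y ^ 2) := by
      filter_upwards [Iio_mem_nhds hx] with y hy
      rw [abs_of_neg hy]
    refine HasDerivAt.congr_of_eventuallyEq ?_ heq
    refine h1.congr_deriv ?_
    have hsx : Real.sqrt (-x) ^ 2 = -x := Real.sq_sqrt (by linarith)
    have hpos : 0 < Real.sqrt (-x) := Real.sqrt_pos.mpr (by linarith)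
    rw [abs_of_neg hx]
    field_simp
    norm_num
    nlinarith [hsx, hpos]
  · subst hx
    have : HasDerivAt (fun y : ℝ => Real.sqrt |y| * y ^ 2) 0 0 := by
      rw [hasDerivAt_iff_tendsto_slope]
      have hc : Filter.Tendsto (fun y : ℝ => Real.sqrt |y| * y) (nhdsWithin 0 {(0:ℝ)}ᶜ) (nhds 0) := by
        have : Continuous (fun y : ℝ => Real.sqrt |y| * y) := by continuity
        have h0 := this.tendsto 0
        simp only [abs_zero, Real.sqrt_zero, zero_mul, mul_zero] at h0
        exact h0.mono_left nhdsWithin_le_nhds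
      refine hc.congr' ?_
      filter_upwards [self_mem_nhdsWithin] with y hy
      have hy' : y ≠ 0 := hy
      rw [slope_def_field]
      field_simp
      ring
    simpa using this
  · have hs : HasDerivAt (fun y : ℝ => Real.sqrt y) (1 / (2 * Real.sqrt x)) x :=
      Real.hasDerivAt_sqrt (ne_of_gt hx)
    have h1 := hs.mul (hasDerivAt_pow 2 x)
    have heq : (fun y : ℝ => Real.sqrt |y| * y ^ 2) =ᶠ[nhds x] (fun y : ℝ => Real.sqrt y * y ^ 2) := by
      filter_upwards [Ioi_mem_nhds hx] with y hy
      rw [abs_of_pos hy]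
    refine HasDerivAt.congr_of_eventuallyEq ?_ heq
    refine h1.congr_deriv ?_
    have hsx : Real.sqrt x ^ 2 = x := Real.sq_sqrt (by linarith)
    have hpos : 0 < Real.sqrt x := Real.sqrt_pos.mpr hx
    rw [abs_of_pos hx]
    field_simp
    norm_num
    nlinarith [hsx, hpos]

/-- The coefficient `K = ∫_{-π}^{π} (φ̇ + 2v̇)φ̇ dτ = 10π φ̇(0)²`, where `v` is any
C², 2π-periodic solution of the linearized inhomogeneous equation
`v̈ + (3/2)|φ|^{1/2}v = -2φ̈` (Lemma 2 of the paper together with the scaling law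
`T'(E₀) = -2π/(5φ̇(0)²)`). -/
theorem coefficient_K_value
    (φ : ℝ → ℝ) (hφ : ContDiff ℝ 2 φ)
    (hper : Function.Periodic φ (2 * π))
    (hmin : ∀ p, 0 < p → Function.Periodic φ p → 2 * π ≤ p)
    (hode : ∀ τ, deriv (deriv φ) τ + |φ τ| ^ ((1:ℝ)/2) * φ τ = 0)
    (hodd : ∀ τ, φ (-τ) = -φ τ)
    (h0 : φ 0 = 0) (h0' : 0 < deriv φ 0)
    (v : ℝ → ℝ) (hv : ContDiff ℝ 2 v)
    (hvper : Function.Periodic v (2 * π))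
    (hvode : ∀ τ, deriv (deriv v) τ + (3/2) * |φ τ| ^ ((1:ℝ)/2) * v τ
        = -2 * deriv (deriv φ) τ) :
    (∫ τ in (-π)..π, (deriv φ τ + 2 * deriv v τ) * deriv φ τ)
      = 10 * π * (deriv φ 0) ^ 2 := by
  obtain ⟨hφd, hpd, hppc⟩ := c2_facts φ hφ
  obtain ⟨hvd, hqd, hqqc⟩ := c2_facts v hv
  have hφc : Continuous φ := hφd.continuous
  have hpc : Continuous (deriv φ) := hpd.continuous
  have hqc : Continuous (deriv v) := hqd.continuous
  have hsqc : Continuous (fun τ => Real.sqrt |φ τ|) := Real.continuous_sqrt.comp hφc.abs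
  -- ODEs in sqrt form
  have hode' : ∀ τ, deriv (deriv φ) τ = -(Real.sqrt |φ τ| * φ τ) := by
    intro τ
    have h := hode τ
    rw [← Real.sqrt_eq_rpow] at h
    linarith
  have hvode' : ∀ τ, deriv (deriv v) τ
      = -2 * deriv (deriv φ) τ - (3/2) * Real.sqrt |φ τ| * v τ := by
    intro τ
    have h := hvode τ
    rw [← Real.sqrt_eq_rpow] at h
    linarith
  -- the shifted function u = v - 4φ
  set u : ℝ → ℝ := fun τ => v τ - 4 * φ τ with hu_def
  have hud : Differentiable ℝ u := hvd.sub (hφd.const_mul 4)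
  have hu' : deriv u = fun τ => deriv v τ - 4 * deriv φ τ := by
    ext τ
    rw [hu_def, deriv_fun_sub (hvd τ) ((hφd τ).const_mul 4), deriv_const_mul 4 (hφd τ)]
  have hu'd : Differentiable ℝ (deriv u) := by
    rw [hu']; exact hqd.sub (hpd.const_mul 4)
  have hcu : Continuous u := hud.continuous
  have hcu' : Continuous (deriv u) := hu'd.continuous
  have hu'' : ∀ τ, deriv (deriv u) τ = deriv (deriv v) τ - 4 * deriv (deriv φ) τ := by
    intro τ
    rw [hu', deriv_fun_sub (hqd τ) ((hpd τ).const_mul 4), deriv_const_mul 4 (hpd τ)]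
  have huode : ∀ τ, deriv (deriv u) τ = -((3/2) * Real.sqrt |φ τ| * u τ) := by
    intro τ
    rw [hu'' τ, hvode' τ, hode' τ, hu_def]
    ring
  have hcu'' : Continuous (deriv (deriv u)) := by
    have : deriv (deriv u) = fun τ => -((3/2) * Real.sqrt |φ τ| * u τ) := funext huode
    rw [this]
    exact ((continuous_const.mul hsqc).mul hcu).neg
  -- boundary values by periodicity
  have hval : ∀ (f : ℝ → ℝ), Function.Periodic f (2*π) → f π = f (-π) := by
    intro f hf
    have h := hf (-π)
    rw [show -π + 2*π = π by ring] at h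
    exact h
  have hpper : Function.Periodic (deriv φ) (2*π) := periodic_deriv' φ _ hper hφd
  have hqper : Function.Periodic (deriv v) (2*π) := periodic_deriv' v _ hvper hvd
  have huper : Function.Periodic u (2*π) := by
    intro τ; rw [hu_def]; simp [hper τ, hvper τ]
  have hu'per : Function.Periodic (deriv u) (2*π) := by
    rw [hu']; intro τ; simp [hpper τ, hqper τ]
  have bφ : φ π = φ (-π) := hval φ hper
  have bp : deriv φ π = deriv φ (-π) := hval _ hpper
  have bu : u π = u (-π) := hval _ huper
  have bu' : deriv u π = deriv u (-π) := hval _ hu'per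
  -- basic integrals
  set A := ∫ x in (-π)..π, deriv φ x ^ 2 with hA_def
  set B := ∫ x in (-π)..π, Real.sqrt |φ x| * φ x ^ 2 with hB_def
  set C := ∫ x in (-π)..π, Real.sqrt |φ x| * φ x * u x with hC_def
  set D := ∫ x in (-π)..π, deriv u x * deriv φ x with hD_def
  -- virial identity: A = B
  have ibp1 : (∫ x in (-π)..π, φ x * deriv (deriv φ) x)
      = φ π * deriv φ π - φ (-π) * deriv φ (-π)
        - ∫ x in (-π)..π, deriv φ x * deriv φ x :=
    intervalIntegral.integral_mul_deriv_eq_deriv_mul (fun x _ => (hφd x).hasDerivAt)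
      (fun x _ => (hpd x).hasDerivAt) (hpc.intervalIntegrable _ _)
      (hppc.intervalIntegrable _ _)
  have e1 : (∫ x in (-π)..π, φ x * deriv (deriv φ) x) = -B := by
    rw [hB_def, ← intervalIntegral.integral_neg]
    apply intervalIntegral.integral_congr
    intro x _
    simp only [hode' x]; ring
  have e2 : (∫ x in (-π)..π, deriv φ x * deriv φ x) = A := by
    rw [hA_def]
    apply intervalIntegral.integral_congr
    intro x _
    ring
  have hAB : A = B := by
    rw [e1, e2, bφ, bp] at ibp1
    linarith
  -- energy conservation
  have hE : ∀ τ, HasDerivAt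
      (fun t => (1/2) * deriv φ t ^ 2 + (2/5) * (Real.sqrt |φ t| * φ t ^ 2)) 0 τ := by
    intro τ
    have h1 : HasDerivAt (fun t => deriv φ t ^ 2)
        (2 * deriv φ τ * deriv (deriv φ) τ) τ := by
      simpa using ((hpd τ).hasDerivAt.fun_pow 2)
    have h2 : HasDerivAt (fun t => Real.sqrt |φ t| * φ t ^ 2)
        ((5/2) * Real.sqrt |φ τ| * φ τ * deriv φ τ) τ :=
      (hasDerivAt_G (φ τ)).comp τ (hφd τ).hasDerivAt
    have h3 := (h1.const_mul (1/2 : ℝ)).add (h2.const_mul (2/5 : ℝ))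
    refine h3.congr_deriv ?_
    rw [hode' τ]; ring
  have hEconst : ∀ τ, (1/2) * deriv φ τ ^ 2 + (2/5) * (Real.sqrt |φ τ| * φ τ ^ 2)
      = (1/2) * deriv φ 0 ^ 2 := by
    intro τ
    have h := is_const_of_deriv_eq_zero
      (f := fun t => (1/2) * deriv φ t ^ 2 + (2/5) * (Real.sqrt |φ t| * φ t ^ 2))
      (fun x => (hE x).differentiableAt) (fun x => (hE x).deriv) τ 0
    simpa [h0] using h
  have hEint : (1/2) * A + (2/5) * B = π * deriv φ 0 ^ 2 := by
    have hcongr : (∫ x in (-π)..π,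
        ((1/2) * deriv φ x ^ 2 + (2/5) * (Real.sqrt |φ x| * φ x ^ 2)))
        = ∫ _x in (-π)..π, ((1/2) * deriv φ 0 ^ 2 : ℝ) :=
      intervalIntegral.integral_congr (fun x _ => hEconst x)
    rw [intervalIntegral.integral_const, intervalIntegral.integral_add
        ((continuous_const.fun_mul (hpc.fun_pow 2)).intervalIntegrable _ _)
        ((continuous_const.fun_mul (hsqc.fun_mul (hφc.fun_pow 2))).intervalIntegrable _ _),
      intervalIntegral.integral_const_mul, intervalIntegral.integral_const_mul] at hcongr
    rw [hA_def, hB_def]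
    rw [smul_eq_mul] at hcongr
    have : π - -π = 2 * π := by ring
    rw [this] at hcongr
    linarith [hcongr]
  have hAval : A = (10/9) * π * deriv φ 0 ^ 2 := by
    rw [hAB] at hEint ⊢
    linarith
  -- orthogonality: D = 0
  have ibp2 : (∫ x in (-π)..π, u x * deriv (deriv φ) x)
      = u π * deriv φ π - u (-π) * deriv φ (-π)
        - ∫ x in (-π)..π, deriv u x * deriv φ x :=
    intervalIntegral.integral_mul_deriv_eq_deriv_mul (fun x _ => (hud x).hasDerivAt)
      (fun x _ => (hpd x).hasDerivAt) (hcu'.intervalIntegrable _ _)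
      (hppc.intervalIntegrable _ _)
  have ibp3 : (∫ x in (-π)..π, φ x * deriv (deriv u) x)
      = φ π * deriv u π - φ (-π) * deriv u (-π)
        - ∫ x in (-π)..π, deriv φ x * deriv u x :=
    intervalIntegral.integral_mul_deriv_eq_deriv_mul (fun x _ => (hφd x).hasDerivAt)
      (fun x _ => (hu'd x).hasDerivAt) (hpc.intervalIntegrable _ _)
      (hcu''.intervalIntegrable _ _)
  have e3 : (∫ x in (-π)..π, u x * deriv (deriv φ) x) = -C := by
    rw [hC_def, ← intervalIntegral.integral_neg]
    apply intervalIntegral.integral_congr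
    intro x _
    simp only [hode' x]; ring
  have e4 : (∫ x in (-π)..π, φ x * deriv (deriv u) x) = -((3/2) * C) := by
    rw [hC_def, ← intervalIntegral.integral_const_mul, ← intervalIntegral.integral_neg]
    apply intervalIntegral.integral_congr
    intro x _
    simp only [huode x]; ring
  have e5 : (∫ x in (-π)..π, deriv φ x * deriv u x) = D := by
    rw [hD_def]
    apply intervalIntegral.integral_congr
    intro x _
    ring
  have hCD1 : -C = -D := by
    rw [e3, bu, bp, ← hD_def] at ibp2
    linarith
  have hCD2 : -((3/2) * C) = -D := by
    rw [e4, bφ, bu', e5] at ibp3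
    linarith
  have hD0 : D = 0 := by linarith
  -- conclusion
  have hfin : (∫ τ in (-π)..π, (deriv φ τ + 2 * deriv v τ) * deriv φ τ)
      = ∫ τ in (-π)..π, (9 * deriv φ τ ^ 2 + 2 * (deriv u τ * deriv φ τ)) := by
    apply intervalIntegral.integral_congr
    intro x _
    rw [hu']
    ring
  rw [hfin, intervalIntegral.integral_add
      ((continuous_const.fun_mul (hpc.fun_pow 2)).intervalIntegrable _ _)
      ((continuous_const.fun_mul (hcu'.fun_mul hpc)).intervalIntegrable _ _),
    intervalIntegral.integral_const_mul, intervalIntegral.integral_const_mul,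
    ← hA_def, ← hD_def, hAval, hD0]
  ring
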